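/- Let n be a positive integer and let b, d be real numbers with b < 1 - n and d < b + 1 - n, and assume d is not a nonpositive integer. Then for every real polynomial g of degree at most n - 1, ∫₁^∞ z^{d-1} (1-z)^{b-d-n} ₂F₁(-n, b; d; z) g(z) dz = 0 (the integral being absolutely convergent). -/

import Mathlib

open MeasureTheory

/-- The Pochhammer symbol `(x)_k = x (x+1) ⋯ (x+k-1)` for a real number `x`. -/
noncomputable def poch (x : ℝ) (k : ℕ) : ℝ := ∏ i ∈ Finset.range k, (x + i)

/-- The terminating Gauss hypergeometric polynomial `₂F₁(-n, b; d; z)`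
    as a real polynomial in `z`. -/
noncomputable def hypPoly (n : ℕ) (b d : ℝ) : Polynomial ℝ :=
  ∑ k ∈ Finset.range (n + 1),
    Polynomial.C ((poch (-(n : ℝ)) k * poch b k) / (poch d k * (Nat.factorial k))) *
      Polynomial.X ^ k

/-! ### Auxiliary algebraic lemmas -/

lemma poch_succ (x : ℝ) (k : ℕ) : poch x (k+1) = poch x k * (x + k) :=
  Finset.prod_range_succ _ _

lemma poch_add (x : ℝ) (a c : ℕ) : poch x (a+c) = poch x a * poch (x+a) c := by
  unfold poch
  rw [Finset.prod_range_add]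
  congr 1
  apply Finset.prod_congr rfl
  intro i _
  push_cast
  ring

lemma poch_ne_zero {x : ℝ} {k : ℕ} (h : ∀ i, i < k → x + i ≠ 0) : poch x k ≠ 0 := by
  unfold poch
  exact Finset.prod_ne_zero_iff.2 fun i hi => h i (Finset.mem_range.1 hi)

lemma poch_neg_nat (n : ℕ) : ∀ k : ℕ, poch (-(n:ℝ)) k = (-1)^k * (n.descFactorial k : ℝ) := by
  intro k
  induction k with
  | zero => simp [poch]
  | succ k ih =>
    rw [poch_succ, ih, Nat.descFactorial_succ]
    rcases lt_or_ge k n with h | h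
    · rw [Nat.cast_mul, Nat.cast_sub h.le]
      push_cast
      ring
    · have hz : ((n - k : ℕ) : ℝ) = (0:ℝ) ∨ ((n.descFactorial k : ℕ) : ℝ) = 0 := by
        rcases eq_or_lt_of_le h with rfl | h'
        · left; simp
        · right; rw [Nat.descFactorial_eq_zero_iff_lt.2 h']; simp
      rcases hz with hz | hz
      · rcases eq_or_lt_of_le h with rfl | h'
        · have : -(n:ℝ) + n = 0 := by ring
          rw [this, mul_zero, Nat.cast_mul, hz]
          ring
        · rw [Nat.descFactorial_eq_zero_iff_lt.2 h']
          push_cast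
          ring
      · rw [hz]
        push_cast [Nat.cast_mul] at hz ⊢
        rw [hz]
        ring

lemma leadingCoeff_taylor_one (p : Polynomial ℝ) :
    (Polynomial.taylor 1 p).leadingCoeff = p.leadingCoeff := by
  unfold Polynomial.leadingCoeff
  rw [Polynomial.natDegree_taylor, Polynomial.taylor_coeff]
  have : Polynomial.hasseDeriv p.natDegree p = Polynomial.C (p.coeff p.natDegree) := by
    ext i
    rw [Polynomial.hasseDeriv_coeff, Polynomial.coeff_C]
    rcases Nat.eq_zero_or_pos i with h | h
    · simp [h]
    · rw [if_neg (by omega), Polynomial.coeff_eq_zero_of_natDegree_lt (by omega), mul_zero]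
  rw [this, Polynomial.eval_C]

/-- The `n`-th finite difference of a polynomial of degree `< n` vanishes. -/
lemma alt_sum_choose_poly : ∀ (n : ℕ) (p : Polynomial ℝ), p.natDegree < n →
    ∑ k ∈ Finset.range (n+1), (-1:ℝ)^k * (n.choose k) * p.eval (k:ℝ) = 0 := by
  intro n
  induction n with
  | zero => intro p hp; omega
  | succ n ih =>
    intro p hp
    set q : Polynomial ℝ := Polynomial.taylor 1 p - p with hq
    have hqeval : ∀ k : ℕ, q.eval (k:ℝ) = p.eval ((k : ℝ) + 1) - p.eval (k:ℝ) := by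
      intro k; simp [hq, Polynomial.taylor_eval]
    have key : ∑ k ∈ Finset.range (n+2), (-1:ℝ)^k * ((n+1).choose k) * p.eval (k:ℝ)
        = - ∑ k ∈ Finset.range (n+1), (-1:ℝ)^k * (n.choose k) * q.eval (k:ℝ) := by
      have pascal : ∀ k : ℕ, (((n+1).choose k : ℕ) : ℝ)
          = ((n.choose k : ℕ) : ℝ) + (if k = 0 then 0 else ((n.choose (k-1) : ℕ) : ℝ)) := by
        intro k
        cases k with
        | zero => simp
        | succ i => rw [if_neg (Nat.succ_ne_zero i), Nat.choose_succ_succ]; push_cast; ring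
      have e1 : ∑ k ∈ Finset.range (n+2), (-1:ℝ)^k * ((n+1).choose k) * p.eval (k:ℝ)
          = (∑ k ∈ Finset.range (n+2), (-1:ℝ)^k * (n.choose k) * p.eval (k:ℝ))
            + ∑ k ∈ Finset.range (n+2), (-1:ℝ)^k *
                (if k = 0 then 0 else ((n.choose (k-1) : ℕ) : ℝ)) * p.eval (k:ℝ) := by
        rw [← Finset.sum_add_distrib]
        apply Finset.sum_congr rfl
        intro k _
        rw [pascal k]; ring
      have e2 : ∑ k ∈ Finset.range (n+2), (-1:ℝ)^k * (n.choose k) * p.eval (k:ℝ)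
          = ∑ k ∈ Finset.range (n+1), (-1:ℝ)^k * (n.choose k) * p.eval (k:ℝ) := by
        rw [Finset.sum_range_succ]
        rw [Nat.choose_succ_self]
        simp
      have e3 : ∑ k ∈ Finset.range (n+2), (-1:ℝ)^k *
            (if k = 0 then 0 else ((n.choose (k-1) : ℕ) : ℝ)) * p.eval (k:ℝ)
          = ∑ i ∈ Finset.range (n+1), -((-1:ℝ)^i * (n.choose i) * p.eval ((i:ℝ)+1)) := by
        rw [Finset.sum_range_succ' (fun k => (-1:ℝ)^k *
            (if k = 0 then 0 else ((n.choose (k-1) : ℕ) : ℝ)) * p.eval (k:ℝ)) (n+1)]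
        simp only [if_neg (Nat.succ_ne_zero _), Nat.succ_sub_one, if_pos rfl,
          if_true, mul_zero, zero_mul, add_zero]
        apply Finset.sum_congr rfl
        intro i _
        push_cast
        ring
      rw [e1, e2, e3, ← Finset.sum_add_distrib, ← Finset.sum_neg_distrib]
      apply Finset.sum_congr rfl
      intro k _
      rw [hqeval k]; ring
    rcases eq_or_ne q 0 with h0 | h0
    · rw [show n+1+1 = n+2 by rfl, key, h0]; simp
    · have hp0 : p ≠ 0 := by
        intro h; apply h0; rw [hq, h]; simp
      have ht0 : Polynomial.taylor 1 p ≠ 0 := by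
        intro h
        exact hp0 (Polynomial.taylor_injective 1 (by simpa using h))
      have hdeg : q.degree < p.degree := by
        have hdt : (Polynomial.taylor 1 p).degree = p.degree := by
          rw [Polynomial.degree_eq_natDegree ht0, Polynomial.degree_eq_natDegree hp0,
            Polynomial.natDegree_taylor]
        have := Polynomial.degree_sub_lt hdt ht0 (leadingCoeff_taylor_one p)
        rw [hdt] at this
        rw [hq]
        exact this
      have hqn : q.natDegree < n := by
        have h1 : q.natDegree < p.natDegree := Polynomial.natDegree_lt_natDegree h0 hdeg
        omega
      rw [show n+1+1 = n+2 by rfl, key, ih q hqn, neg_zero]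

/-- The Saalschütz-type vanishing sum. -/
lemma saal_sum_zero (n m : ℕ) (hm : m < n) (b d : ℝ)
    (hdne : ∀ j : ℕ, d + j ≠ 0)
    (hbne : ∀ j : ℕ, j < n → b + m + 1 - n + j ≠ 0) :
    ∑ k ∈ Finset.range (n+1),
      (poch (-(n:ℝ)) k * poch b k) / (poch d k * (Nat.factorial k)) *
        (poch (d+m) k / poch (b + m + 1 - n) k) = 0 := by
  obtain ⟨r, hr⟩ : ∃ r : ℕ, n = m + 1 + r := ⟨n - 1 - m, by omega⟩
  have hbr : b + (m:ℝ) + 1 - n = b - r := by rw [hr]; push_cast; ring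
  have hbrne : ∀ i : ℕ, i < n → b - r + i ≠ 0 := by
    intro i hi
    have := hbne i hi
    rwa [hbr] at this
  set P : Polynomial ℝ :=
    Polynomial.C ((poch d m * poch (b - r) r)⁻¹) *
      ((∏ i ∈ Finset.range m, (Polynomial.X + Polynomial.C (d + i))) *
       (∏ i ∈ Finset.range r, (Polynomial.X + Polynomial.C (b - (r:ℝ) + i)))) with hP
  have hPdeg : P.natDegree < n := by
    rw [hP]
    calc (Polynomial.C ((poch d m * poch (b - r) r)⁻¹) *
        ((∏ i ∈ Finset.range m, (Polynomial.X + Polynomial.C (d + i))) *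
         (∏ i ∈ Finset.range r, (Polynomial.X + Polynomial.C (b - (r:ℝ) + i))))).natDegree
        ≤ (Polynomial.C ((poch d m * poch (b - r) r)⁻¹)).natDegree +
          ((∏ i ∈ Finset.range m, (Polynomial.X + Polynomial.C (d + i))) *
           (∏ i ∈ Finset.range r, (Polynomial.X + Polynomial.C (b - (r:ℝ) + i)))).natDegree :=
          Polynomial.natDegree_mul_le
      _ ≤ 0 + (((∏ i ∈ Finset.range m, (Polynomial.X + Polynomial.C (d + i))).natDegree) +
           ((∏ i ∈ Finset.range r, (Polynomial.X + Polynomial.C (b - (r:ℝ) + i))).natDegree)) := by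
          gcongr
          · exact le_of_eq (Polynomial.natDegree_C _)
          · exact Polynomial.natDegree_mul_le
      _ ≤ 0 + (m + r) := by
          gcongr
          · exact (Polynomial.natDegree_prod_le _ _).trans (by
              apply le_trans (Finset.sum_le_card_nsmul _ _ 1 ?_) (by simp)
              intro i _
              exact le_of_eq (Polynomial.natDegree_X_add_C _))
          · exact (Polynomial.natDegree_prod_le _ _).trans (by
              apply le_trans (Finset.sum_le_card_nsmul _ _ 1 ?_) (by simp)
              intro i _
              exact le_of_eq (Polynomial.natDegree_X_add_C _))
      _ < n := by omega
  have hPeval : ∀ k : ℕ, P.eval (k:ℝ)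
      = (poch d m * poch (b - r) r)⁻¹ * (poch (d + k) m * poch (b - (r:ℝ) + k) r) := by
    intro k
    rw [hP]
    simp only [Polynomial.eval_mul, Polynomial.eval_C, Polynomial.eval_prod,
      Polynomial.eval_add, Polynomial.eval_X]
    congr 1
    unfold poch
    congr 1
    · exact Finset.prod_congr rfl fun i _ => by ring
    · exact Finset.prod_congr rfl fun i _ => by ring
  have hkey : ∀ k ∈ Finset.range (n+1),
      (poch (-(n:ℝ)) k * poch b k) / (poch d k * (Nat.factorial k)) *
        (poch (d+m) k / poch (b + m + 1 - n) k)
      = (-1:ℝ)^k * (n.choose k) * P.eval (k:ℝ) := by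
    intro k hk
    have hkn : k ≤ n := by simpa using Nat.lt_succ_iff.1 (Finset.mem_range.1 hk)
    have hA : poch (b-r) r * poch b k = poch (b-r) k * poch (b - (r:ℝ) + k) r := by
      have h1 := poch_add (b - (r:ℝ)) r k
      have h2 := poch_add (b - (r:ℝ)) k r
      rw [sub_add_cancel] at h1
      rw [add_comm k r] at h2
      rw [← h1, h2]
    have hB : poch d m * poch (d + (m:ℝ)) k = poch d k * poch (d + (k:ℝ)) m := by
      have h1 := poch_add d m k
      have h2 := poch_add d k m
      rw [add_comm k m] at h2
      rw [← h1, h2]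
    have hdk : poch d k ≠ 0 := poch_ne_zero fun i _ => hdne i
    have hdm : poch d m ≠ 0 := poch_ne_zero fun i _ => hdne i
    have hbrk : poch (b - (r:ℝ)) k ≠ 0 := poch_ne_zero fun i hi => hbrne i (by omega)
    have hbrr : poch (b - (r:ℝ)) r ≠ 0 := poch_ne_zero fun i hi => hbrne i (by omega)
    have hfac : ((Nat.factorial k : ℕ) : ℝ) ≠ 0 := by
      exact_mod_cast Nat.factorial_ne_zero k
    rw [poch_neg_nat, Nat.descFactorial_eq_factorial_mul_choose, hbr, hPeval]
    push_cast
    field_simp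
    ring_nf
    linear_combination ((n.choose k : ℝ) *
      poch (d + (m:ℝ)) k * poch d m) * hA +
      ((n.choose k : ℝ) *
      poch (b - (r:ℝ)) k * poch (b - (r:ℝ) + k) r) * hB
  rw [Finset.sum_congr rfl hkey]
  exact alt_sum_choose_poly n P hPdeg

/-! ### Auxiliary analytic lemmas -/

lemma weight_measurable (α β : ℝ) : Measurable (fun z : ℝ => z ^ α * (z-1) ^ β) :=
  (measurable_id.pow_const α).mul ((measurable_id.sub measurable_const).pow_const β)

lemma integrable_weight {α β : ℝ} (hβ : -1 < β) (hαβ : α + β < -1) :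
    IntegrableOn (fun z : ℝ => z ^ α * (z-1) ^ β) (Set.Ioi (1:ℝ)) := by
  have hmeas := weight_measurable α β
  have h12 : IntegrableOn (fun z : ℝ => z ^ α * (z-1) ^ β) (Set.Ioc 1 2) := by
    have hint : IntegrableOn (fun z : ℝ => (z-1) ^ β) (Set.Ioc 1 2) := by
      have h := (intervalIntegral.intervalIntegrable_rpow' (a:=0) (b:=1) hβ).comp_sub_right 1
      rw [intervalIntegrable_iff_integrableOn_Ioc_of_le (by norm_num)] at h
      norm_num at h; exact h
    apply Integrable.mono' (g := fun z : ℝ => max (2 ^ α) 1 * ((z-1) ^ β))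
      (hint.const_mul _) hmeas.aestronglyMeasurable.restrict
    rw [ae_restrict_iff' measurableSet_Ioc]
    filter_upwards with z hz
    have hz1 : (1:ℝ) < z := hz.1
    have hznn : (0:ℝ) ≤ z - 1 := by linarith
    rw [Real.norm_eq_abs, abs_of_nonneg (mul_nonneg (Real.rpow_nonneg (by linarith) _)
      (Real.rpow_nonneg hznn _))]
    apply mul_le_mul_of_nonneg_right _ (Real.rpow_nonneg hznn _)
    rcases le_or_gt 0 α with hα | hα
    · exact le_max_of_le_left (Real.rpow_le_rpow (by linarith) hz.2 hα)
    · exact le_max_of_le_right (Real.rpow_le_one_of_one_le_of_nonpos hz1.le hα.le)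
  have h2i : IntegrableOn (fun z : ℝ => z ^ α * (z-1) ^ β) (Set.Ioi 2) := by
    have hint : IntegrableOn (fun z : ℝ => z ^ (α+β)) (Set.Ioi 2) :=
      integrableOn_Ioi_rpow_of_lt hαβ (by norm_num)
    apply Integrable.mono' (g := fun z : ℝ => max (2 ^ (-β)) 1 * z ^ (α+β))
      (hint.const_mul _) hmeas.aestronglyMeasurable.restrict
    rw [ae_restrict_iff' measurableSet_Ioi]
    filter_upwards with z hz
    have hz2 : (2:ℝ) < z := hz
    have hz0 : (0:ℝ) < z := by linarith
    have hznn : (0:ℝ) ≤ z - 1 := by linarith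
    rw [Real.norm_eq_abs, abs_of_nonneg (mul_nonneg (Real.rpow_nonneg hz0.le _)
      (Real.rpow_nonneg hznn _))]
    have hbound : (z-1) ^ β ≤ max (2 ^ (-β)) 1 * z ^ β := by
      rcases le_or_gt 0 β with hbe | hbe
      · calc (z-1) ^ β ≤ z ^ β := Real.rpow_le_rpow hznn (by linarith) hbe
          _ ≤ max (2 ^ (-β)) 1 * z ^ β := by
              nlinarith [Real.rpow_nonneg hz0.le β, le_max_right ((2:ℝ) ^ (-β)) 1]
      · have h1 : (z-1) ^ β ≤ (z/2) ^ β :=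
          Real.rpow_le_rpow_of_nonpos (by linarith) (by linarith) hbe.le
        have h2 : (z/2) ^ β = 2 ^ (-β) * z ^ β := by
          rw [Real.div_rpow hz0.le (by norm_num), Real.rpow_neg (by norm_num)]
          ring
        calc (z-1) ^ β ≤ 2 ^ (-β) * z ^ β := by rw [← h2]; exact h1
          _ ≤ max (2 ^ (-β)) 1 * z ^ β := by
              nlinarith [Real.rpow_nonneg hz0.le β, le_max_left ((2:ℝ) ^ (-β)) 1]
    calc z ^ α * (z-1) ^ β ≤ z ^ α * (max (2 ^ (-β)) 1 * z ^ β) :=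
          mul_le_mul_of_nonneg_left hbound (Real.rpow_nonneg hz0.le _)
      _ = max (2 ^ (-β)) 1 * z ^ (α+β) := by rw [Real.rpow_add hz0]; ring
  have hsplit : Set.Ioi (1:ℝ) = Set.Ioc 1 2 ∪ Set.Ioi 2 :=
    (Set.Ioc_union_Ioi_eq_Ioi (by norm_num)).symm
  rw [hsplit]
  exact h12.union h2i

lemma weight_rec {α β : ℝ} (hβ : -1 < β) (hαβ : α + 1 + β < -1) :
    (α + β + 2) * ∫ z in Set.Ioi (1:ℝ), z ^ (α+1) * (z-1) ^ β
      = (α + 1) * ∫ z in Set.Ioi (1:ℝ), z ^ α * (z-1) ^ β := by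
  set F : ℝ → ℝ := fun z => z ^ (α+1) * (z-1) ^ (β+1) with hF
  set φ : ℝ → ℝ := fun z =>
    (α+β+2) * (z ^ (α+1) * (z-1) ^ β) - (α+1) * (z ^ α * (z-1) ^ β) with hφ
  have hint1 : IntegrableOn (fun z : ℝ => z ^ (α+1) * (z-1) ^ β) (Set.Ioi 1) :=
    integrable_weight hβ (by linarith)
  have hint0 : IntegrableOn (fun z : ℝ => z ^ α * (z-1) ^ β) (Set.Ioi 1) :=
    integrable_weight hβ (by linarith)
  have hφint : IntegrableOn φ (Set.Ioi 1) :=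
    (hint1.const_mul _).sub (hint0.const_mul _)
  have hderiv : ∀ z ∈ Set.Ioi (1:ℝ), HasDerivAt F (φ z) z := by
    intro z hz
    have hz1 : (1:ℝ) < z := hz
    have hz0 : (0:ℝ) < z := by linarith
    have hzm : (0:ℝ) < z - 1 := by linarith
    have h1 : HasDerivAt (fun z : ℝ => z ^ (α+1)) ((α+1) * z ^ α) z := by
      have := Real.hasDerivAt_rpow_const (x := z) (p := α+1) (Or.inl hz0.ne')
      simpa using this
    have h2 : HasDerivAt (fun z : ℝ => (z-1) ^ (β+1)) ((β+1) * (z-1) ^ β) z := by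
      have hb : HasDerivAt (fun z : ℝ => z - 1) 1 z := (hasDerivAt_id z).sub_const 1
      have := hb.rpow_const (p := β+1) (Or.inl hzm.ne')
      simpa using this
    have := h1.mul h2
    refine this.congr_deriv ?_
    rw [hφ]
    have e1 : (z-1) ^ (β+1) = (z-1) ^ β * (z-1) := by
      rw [Real.rpow_add_one hzm.ne']
    have e2 : z ^ (α+1) = z ^ α * z := by
      rw [Real.rpow_add_one hz0.ne']
    simp only [e1, e2]
    ring
  have hcont : ContinuousWithinAt F (Set.Ici 1) 1 := by
    apply ContinuousAt.continuousWithinAt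
    apply ContinuousAt.mul
    · exact (Real.continuousAt_rpow_const 1 (α+1) (Or.inl one_ne_zero))
    · have h1 : ContinuousAt (fun z : ℝ => z - 1) 1 := continuousAt_id.sub continuousAt_const
      have h2 : ContinuousAt (fun x : ℝ => x ^ (β+1)) ((1:ℝ) - 1) := by
        rw [sub_self]
        exact Real.continuousAt_rpow_const 0 (β+1) (Or.inr (by linarith))
      exact ContinuousAt.comp (g := fun x : ℝ => x ^ (β+1)) h2 h1
  have htend : Filter.Tendsto F Filter.atTop (nhds 0) := by
    have h1 : Filter.Tendsto (fun z : ℝ => z ^ (α+β+2)) Filter.atTop (nhds 0) := by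
      have := tendsto_rpow_neg_atTop (y := -(α+β+2)) (by linarith)
      simpa using this
    have h2 : Filter.Tendsto (fun z : ℝ => (1 - z⁻¹) ^ (β+1)) Filter.atTop (nhds 1) := by
      have hb : Filter.Tendsto (fun z : ℝ => 1 - z⁻¹) Filter.atTop (nhds 1) := by
        have := tendsto_const_nhds (x := (1:ℝ)) (f := Filter.atTop).sub tendsto_inv_atTop_zero
        simpa using this
      have hc : ContinuousAt (fun x : ℝ => x ^ (β+1)) 1 :=
        Real.continuousAt_rpow_const 1 (β+1) (Or.inl one_ne_zero)
      have := hc.tendsto.comp hb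
      rw [Real.one_rpow] at this
      exact this
    have hmul := h1.mul h2
    rw [mul_one] at hmul
    apply hmul.congr'
    filter_upwards [Filter.eventually_gt_atTop (1:ℝ)] with z hz
    have hz0 : (0:ℝ) < z := by linarith
    have hinv : 0 ≤ 1 - z⁻¹ := by
      have : z⁻¹ ≤ 1 := by
        rw [inv_le_one_iff₀]; right; linarith
      linarith
    rw [hF]
    have e1 : z - 1 = z * (1 - z⁻¹) := by field_simp
    calc z ^ (α+β+2) * (1 - z⁻¹) ^ (β+1)
        = z ^ (α+1) * (z ^ (β+1) * (1 - z⁻¹) ^ (β+1)) := by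
          rw [show α+β+2 = α+1+(β+1) by ring, Real.rpow_add hz0, mul_assoc]
      _ = z ^ (α+1) * (z * (1 - z⁻¹)) ^ (β+1) := by
          rw [Real.mul_rpow hz0.le hinv]
      _ = z ^ (α+1) * (z - 1) ^ (β+1) := by rw [← e1]
  have hFTC := MeasureTheory.integral_Ioi_of_hasDerivAt_of_tendsto hcont hderiv hφint htend
  have hF1 : F 1 = 0 := by
    rw [hF]
    simp only [sub_self]
    rw [Real.zero_rpow (by linarith : β + 1 ≠ 0)]
    ring
  rw [hF1, sub_zero] at hFTC
  have hsplit : ∫ z in Set.Ioi (1:ℝ), φ z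
      = (α+β+2) * (∫ z in Set.Ioi (1:ℝ), z ^ (α+1) * (z-1) ^ β)
        - (α+1) * (∫ z in Set.Ioi (1:ℝ), z ^ α * (z-1) ^ β) := by
    rw [hφ]
    rw [MeasureTheory.integral_sub (hint1.const_mul _) (hint0.const_mul _)]
    rw [MeasureTheory.integral_const_mul, MeasureTheory.integral_const_mul]
  rw [hsplit] at hFTC
  linarith [hFTC]

lemma moment_prod {β : ℝ} (hβ : -1 < β) (α : ℝ) :
    ∀ k : ℕ, α + k + β < -1 →
    (∏ j ∈ Finset.range k, (α+β+2+j)) * ∫ z in Set.Ioi (1:ℝ), z ^ (α+k) * (z-1) ^ β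
      = (∏ j ∈ Finset.range k, (α+1+j)) * ∫ z in Set.Ioi (1:ℝ), z ^ α * (z-1) ^ β := by
  intro k
  induction k with
  | zero => intro _; norm_num
  | succ k ih =>
    intro hconv
    have hconv' : α + k + β < -1 := by push_cast at hconv ⊢; linarith
    have hrec := weight_rec (α := α + k) hβ (by push_cast at hconv ⊢; linarith)
    have hcast : α + ((k:ℝ) + 1) = α + k + 1 := by ring
    rw [Finset.prod_range_succ, Finset.prod_range_succ]
    push_cast
    rw [hcast]
    calc (∏ j ∈ Finset.range k, (α+β+2+j)) * (α+β+2+k) *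
          ∫ z in Set.Ioi (1:ℝ), z ^ (α+k+1) * (z-1) ^ β
        = (∏ j ∈ Finset.range k, (α+β+2+j)) *
          ((α+k+β+2) * ∫ z in Set.Ioi (1:ℝ), z ^ (α+k+1) * (z-1) ^ β) := by ring
      _ = (∏ j ∈ Finset.range k, (α+β+2+j)) *
          ((α+k+1) * ∫ z in Set.Ioi (1:ℝ), z ^ (α+k) * (z-1) ^ β) := by
          rw [show α+k+β+2 = (α+k)+β+2 by ring, show α+k+1 = (α+k)+1 by ring, hrec]
      _ = (α+1+k) * ((∏ j ∈ Finset.range k, (α+β+2+j)) *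
          ∫ z in Set.Ioi (1:ℝ), z ^ (α+k) * (z-1) ^ β) := by ring
      _ = (α+1+k) * ((∏ j ∈ Finset.range k, (α+1+j)) *
          ∫ z in Set.Ioi (1:ℝ), z ^ α * (z-1) ^ β) := by
          rw [ih hconv']
      _ = (∏ j ∈ Finset.range k, (α+1+j)) * (α+1+k) *
          ∫ z in Set.Ioi (1:ℝ), z ^ α * (z-1) ^ β := by ring

/-- For `b < 1 - n`, `d < b + 1 - n` and `d` not a nonpositive integer, the polynomial
`₂F₁(-n, b; d; z)` is orthogonal on `(1, ∞)` with respect to the weight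
`z^(d-1) (1-z)^(b-d-n)` (the latter factor interpreted via the continuous branch
`(z-1)^(b-d-n)` for `z > 1`) to every real polynomial `g` of degree at most `n - 1`,
the integral being absolutely convergent. -/
theorem hyp_orthogonality_Ioi_one (n : ℕ) (hn : 0 < n) (b d : ℝ)
    (hb : b < 1 - n) (hd : d < b + 1 - n) (hdz : ∀ k : ℕ, d ≠ -(k : ℝ))
    (g : Polynomial ℝ) (hg : g.natDegree < n) :
    IntegrableOn
      (fun z : ℝ => Real.rpow z (d - 1) * Real.rpow (z - 1) (b - d - n) *
        (hypPoly n b d).eval z * g.eval z) (Set.Ioi 1) ∧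
    ∫ z in Set.Ioi (1 : ℝ),
      Real.rpow z (d - 1) * Real.rpow (z - 1) (b - d - n) *
        (hypPoly n b d).eval z * g.eval z = 0 := by
  have hβ : -1 < b - d - n := by linarith
  set β : ℝ := b - d - n with hβdef
  set c : ℕ → ℝ := fun k => (poch (-(n:ℝ)) k * poch b k) / (poch d k * (Nat.factorial k))
    with hc
  set f : ℕ → ℕ → ℝ → ℝ := fun m k z =>
    (g.coeff m * c k) * (z ^ (d - 1 + m + k) * (z-1) ^ β) with hf
  have hconv : ∀ m k : ℕ, m < n → k ≤ n → (d - 1 + m) + k + β < -1 := by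
    intro m k hm hk
    have hm' : (m:ℝ) + 1 ≤ n := by exact_mod_cast hm
    have hk' : (k:ℝ) ≤ n := by exact_mod_cast hk
    rw [hβdef]; linarith
  have hint : ∀ m ∈ Finset.range n, ∀ k ∈ Finset.range (n+1),
      IntegrableOn (fun z : ℝ => z ^ (d - 1 + m + k) * (z-1) ^ β) (Set.Ioi 1) := by
    intro m hm k hk
    exact integrable_weight hβ
      (hconv m k (Finset.mem_range.1 hm) (Nat.lt_succ_iff.1 (Finset.mem_range.1 hk)))
  have hsumInt : IntegrableOn
      (fun z : ℝ => ∑ m ∈ Finset.range n, ∑ k ∈ Finset.range (n+1), f m k z)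
      (Set.Ioi 1) := by
    apply MeasureTheory.integrable_finset_sum
    intro m hm
    apply MeasureTheory.integrable_finset_sum
    intro k hk
    exact ((hint m hm k hk).const_mul _)
  have hEq : Set.EqOn
      (fun z : ℝ => Real.rpow z (d - 1) * Real.rpow (z - 1) (b - d - n) *
        (hypPoly n b d).eval z * g.eval z)
      (fun z : ℝ => ∑ m ∈ Finset.range n, ∑ k ∈ Finset.range (n+1), f m k z)
      (Set.Ioi 1) := by
    intro z hz
    have hz1 : (1:ℝ) < z := hz
    have hz0 : (0:ℝ) < z := by linarith
    simp only [Real.rpow_eq_pow]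
    have hFe : (hypPoly n b d).eval z = ∑ k ∈ Finset.range (n+1), c k * z ^ k := by
      rw [hypPoly, Polynomial.eval_finset_sum]
      apply Finset.sum_congr rfl
      intro k _
      rw [hc]
      simp
    have hge : g.eval z = ∑ m ∈ Finset.range n, g.coeff m * z ^ m :=
      Polynomial.eval_eq_sum_range' hg z
    show z ^ (d-1) * (z-1) ^ β * (hypPoly n b d).eval z * g.eval z = _
    rw [hFe, hge]
    rw [Finset.mul_sum]
    apply Finset.sum_congr rfl
    intro m _
    rw [Finset.mul_sum, Finset.sum_mul]
    apply Finset.sum_congr rfl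
    intro k _
    rw [hf]
    have e : z ^ (d - 1 + (m:ℝ) + (k:ℝ)) = z ^ (d-1) * z ^ (m:ℝ) * z ^ (k:ℝ) := by
      rw [Real.rpow_add hz0, Real.rpow_add hz0]
    simp only [e, Real.rpow_natCast]
    ring
  constructor
  · exact hsumInt.congr_fun hEq.symm measurableSet_Ioi
  rw [MeasureTheory.setIntegral_congr_fun measurableSet_Ioi hEq]
  rw [MeasureTheory.integral_finset_sum _ (fun m hm =>
    MeasureTheory.integrable_finset_sum _ (fun k hk => (hint m hm k hk).const_mul _))]
  apply Finset.sum_eq_zero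
  intro m hm
  have hm' : m < n := Finset.mem_range.1 hm
  rw [MeasureTheory.integral_finset_sum _ (fun k hk => (hint m hm k hk).const_mul _)]
  have hbneg : ∀ j : ℕ, j < n → b + (m:ℝ) + 1 - n + j ≠ 0 := by
    intro j hj
    have hmr : (m:ℝ) + 1 ≤ n := by exact_mod_cast hm'
    have hjr : (j:ℝ) + 1 ≤ n := by exact_mod_cast hj
    have : b + (m:ℝ) + 1 - n + j < 0 := by linarith
    linarith
  have hIval : ∀ k ∈ Finset.range (n+1),
      (∫ z in Set.Ioi (1:ℝ), z ^ (d - 1 + (m:ℝ) + (k:ℝ)) * (z-1) ^ β)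
        = (∫ z in Set.Ioi (1:ℝ), z ^ (d - 1 + (m:ℝ)) * (z-1) ^ β) *
          (poch (d+m) k / poch (b + m + 1 - n) k) := by
    intro k hk
    have hkn : k ≤ n := Nat.lt_succ_iff.1 (Finset.mem_range.1 hk)
    have hmp := moment_prod hβ (d - 1 + (m:ℝ)) k (hconv m k hm' hkn)
    have e1 : (∏ j ∈ Finset.range k, ((d - 1 + (m:ℝ))+β+2+j)) = poch (b + m + 1 - n) k := by
      unfold poch
      apply Finset.prod_congr rfl
      intro j _
      rw [hβdef]; ring
    have e2 : (∏ j ∈ Finset.range k, ((d - 1 + (m:ℝ))+1+j)) = poch (d+m) k := by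
      unfold poch
      apply Finset.prod_congr rfl
      intro j _
      ring
    rw [e1, e2] at hmp
    have hbk : poch (b + m + 1 - n) k ≠ 0 :=
      poch_ne_zero fun i hi => hbneg i (by omega)
    field_simp
    linear_combination hmp
  calc ∑ k ∈ Finset.range (n+1),
        ∫ z in Set.Ioi (1:ℝ), f m k z
      = ∑ k ∈ Finset.range (n+1), (g.coeff m * (∫ z in Set.Ioi (1:ℝ),
          z ^ (d - 1 + (m:ℝ)) * (z-1) ^ β)) *
          (c k * (poch (d+m) k / poch (b + m + 1 - n) k)) := by
        apply Finset.sum_congr rfl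
        intro k hk
        rw [hf]
        rw [MeasureTheory.integral_const_mul]
        rw [hIval k hk]
        ring
    _ = (g.coeff m * (∫ z in Set.Ioi (1:ℝ), z ^ (d - 1 + (m:ℝ)) * (z-1) ^ β)) *
        ∑ k ∈ Finset.range (n+1), c k * (poch (d+m) k / poch (b + m + 1 - n) k) := by
        rw [Finset.mul_sum]
    _ = 0 := by
        have hdne : ∀ j : ℕ, d + (j:ℝ) ≠ 0 := by
          intro j hj
          exact hdz j (by linarith)
        rw [hc]
        rw [saal_sum_zero n m hm' b d hdne hbneg, mul_zero]
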